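/- For a locally small space (X, 𝓛), the following conditions are equivalent: (1) X ∈ 𝓛; (2) 𝓛ˢ = 𝒫(X); (3) 𝓛 = 𝓛°; (4) every admissible family is essentially finite; (5) every admissible family whose union is X is essentially finite. -/

import Mathlib

open Set

/-- The family of sets compatible with a family `L`:
`L° = {Y : ∀ M ∈ L, Y ∩ M ∈ L}`. -/
def compatible {X : Type*} (L : Set (Set X)) : Set (Set X) :=
  {Y | ∀ M ∈ L, Y ∩ M ∈ L}

/-- The small sets: `Lˢ = {B : ∃ M ∈ L, B ⊆ M}`. -/
def smalls {X : Type*} (L : Set (Set X)) : Set (Set X) :=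
  {B | ∃ M ∈ L, B ⊆ M}

/-- The weakly open sets: `L^wo = {⋃₀ U : U ⊆ L}`. -/
def weaklyOpens {X : Type*} (L : Set (Set X)) : Set (Set X) :=
  {W | ∃ U ⊆ L, W = ⋃₀ U}

/-- `(X, L)` is a locally small space: `∅ ∈ L`, `L` is closed under binary
intersections and unions, and `L` covers `X`. -/
def IsLSS {X : Type*} (L : Set (Set X)) : Prop :=
  ∅ ∈ L ∧ (∀ a ∈ L, ∀ b ∈ L, a ∩ b ∈ L ∧ a ∪ b ∈ L) ∧ ⋃₀ L = Set.univ

/-- An admissible (locally essentially finite) open family. -/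
def Admissible {X : Type*} (L U : Set (Set X)) : Prop :=
  U ⊆ compatible L ∧
    ∀ M ∈ L, ∃ F ⊆ U, F.Finite ∧ (⋃₀ U) ∩ M = (⋃₀ F) ∩ M


lemma sUnion_finite_mem {X : Type*} {L : Set (Set X)} (h : IsLSS L)
    {F : Set (Set X)} (hF : F.Finite) (hFL : F ⊆ L) : ⋃₀ F ∈ L := by
  refine Set.Finite.induction_on_subset (motive := fun s _ => ⋃₀ s ∈ L) F hF (by simpa using h.1) ?_ 
  intro a s haF _ _ ih
  rw [Set.sUnion_insert]
  exact (h.2.1 a (hFL haF) _ ih).2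

theorem small_space_tfae {X : Type*} (L : Set (Set X)) (h : IsLSS L) :
    List.TFAE
      [Set.univ ∈ L,
       smalls L = Set.univ,
       L = compatible L,
       ∀ U : Set (Set X), Admissible L U → ∃ F ⊆ U, F.Finite ∧ ⋃₀ U = ⋃₀ F,
       ∀ U : Set (Set X), Admissible L U → ⋃₀ U = Set.univ →
         ∃ F ⊆ U, F.Finite ∧ ⋃₀ U = ⋃₀ F] := by
  tfae_have 1 → 2 := by
    intro h1
    ext B
    simp only [smalls, Set.mem_setOf_eq, Set.mem_univ, iff_true]
    exact ⟨Set.univ, h1, Set.subset_univ B⟩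
  tfae_have 2 → 3 := by
    intro h2
    apply Set.Subset.antisymm
    · intro M hM N hN
      exact (h.2.1 M hM N hN).1
    · intro Y hY
      have : Y ∈ smalls L := h2 ▸ Set.mem_univ Y
      obtain ⟨M, hM, hYM⟩ := this
      have : Y ∩ M = Y := Set.inter_eq_left.mpr hYM
      rw [← this]
      exact hY M hM
  tfae_have 3 → 1 := by
    intro h3
    rw [h3]
    intro M hM
    simpa using hM
  tfae_have 1 → 4 := by
    intro h1 U hU
    obtain ⟨F, hFU, hFfin, hEq⟩ := hU.2 Set.univ h1
    exact ⟨F, hFU, hFfin, by simpa using hEq⟩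
  tfae_have 4 → 5 := fun h4 U hU _ => h4 U hU
  tfae_have 5 → 1 := by
    intro h5
    have hadm : Admissible L L := by
      refine ⟨fun M hM N hN => (h.2.1 M hM N hN).1, fun M hM => ?_⟩
      refine ⟨{M}, Set.singleton_subset_iff.mpr hM, Set.finite_singleton M, ?_⟩
      rw [h.2.2, Set.sUnion_singleton, Set.univ_inter, Set.inter_self]
    obtain ⟨F, hFL, hFfin, hEq⟩ := h5 L hadm h.2.2
    have : ⋃₀ F ∈ L := sUnion_finite_mem h hFfin hFL
    rwa [← hEq, h.2.2] at this
  tfae_finish
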